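/- For every t > 0 and every x > 0, y > 0, lim_{ξ→0⁺} (K_0(e^{−y/ξ})/K_0(e^{−x/ξ}))·Q_ξ(t,y|x) = (y/x)·(2πt)^{−1/2}·(e^{−(x−y)²/(2t)} − e^{−(x+y)²/(2t)}), which is the transition probability density of the three-dimensional Bessel process BES(3). -/

import Mathlib

open MeasureTheory Filter Topology

/-- Macdonald function of order zero: `K₀(z) = ∫_0^∞ e^{-z cosh u} du`. -/
noncomputable def K0 (z : ℝ) : ℝ := ∫ u in Set.Ioi (0:ℝ), Real.exp (-(z * Real.cosh u))

/-- Macdonald function of imaginary order: `K_{ik}(z) = ∫_0^∞ e^{-z cosh u} cos(ku) du`. -/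
noncomputable def Kik (k z : ℝ) : ℝ :=
  ∫ u in Set.Ioi (0:ℝ), Real.exp (-(z * Real.cosh u)) * Real.cos (k * u)

/-- Transition probability density `Q_ξ(t,y|x)` of the ξ-killing Brownian motion. -/
noncomputable def Qxi (ξ t y x : ℝ) : ℝ :=
  (1 / Real.pi ^ 2) *
    ∫ k : ℝ, Real.exp (-(k ^ 2 * t) / 2) * Kik (ξ * k) (Real.exp (-(x / ξ)))
      * Kik (ξ * k) (Real.exp (-(y / ξ))) * (ξ * k * Real.sinh (Real.pi * ξ * k))

/-- Survival probability `N_ξ(T,x) = ∫_ℝ Q_ξ(T,y|x) dy`. -/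
noncomputable def Nxi (ξ T x : ℝ) : ℝ := ∫ y : ℝ, Qxi ξ T y x

section BesselAux

open Real Set

/-! ### Elementary inequalities -/

lemma my_le_exp_half {s : ℝ} (hs : 0 ≤ s) : s ≤ Real.exp s / 2 := by
  have h1 := Real.add_one_le_exp (s/2)
  have h2 : Real.exp (s/2) * Real.exp (s/2) = Real.exp s := by
    rw [← Real.exp_add]; ring_nf
  nlinarith [Real.exp_pos (s/2), sq_nonneg (1 - s/2)]

lemma my_sinh_le {a : ℝ} (ha : 0 ≤ a) : Real.sinh a ≤ a * Real.exp a := by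
  have h1 := Real.add_one_le_exp (-a)
  have h2 : Real.exp (-a) * Real.exp a = 1 := by rw [← Real.exp_add]; simp
  have h3 := Real.one_le_exp ha
  rw [Real.sinh_eq]
  nlinarith [Real.exp_pos (-a), Real.exp_pos a]

lemma my_half_exp_le_cosh (a : ℝ) : Real.exp a / 2 ≤ Real.cosh a := by
  rw [Real.cosh_eq]; nlinarith [Real.exp_pos (-a)]

lemma my_cosh_le_exp {a : ℝ} (ha : 0 ≤ a) : Real.cosh a ≤ Real.exp a := by
  rw [Real.cosh_eq]
  have : Real.exp (-a) ≤ Real.exp a := Real.exp_le_exp.2 (by linarith)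
  linarith

lemma my_sinh_slope (c : ℝ) :
    Tendsto (fun ξ : ℝ => Real.sinh (c*ξ) / ξ) (𝓝[>] 0) (𝓝 c) := by
  have hd : HasDerivAt (fun ξ : ℝ => Real.sinh (c*ξ)) c 0 := by
    have := (Real.hasDerivAt_sinh (c*0)).comp 0 ((hasDerivAt_id (0:ℝ)).const_mul c)
    simpa [Function.comp_def] using this
  have h1 := hasDerivAt_iff_tendsto_slope.mp hd
  have h2 : Tendsto (slope (fun ξ : ℝ => Real.sinh (c*ξ)) 0) (𝓝[>] 0) (𝓝 c) :=
    h1.mono_left (nhdsWithin_mono 0 (fun z hz => ne_of_gt hz))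
  refine h2.congr (fun ξ => ?_)
  simp [slope_def_field, div_eq_mul_inv]

/-! ### The rescaled kernel `Gk` -/

/-- The rescaled integrand appearing after substituting `u = v/ξ`. -/
noncomputable def Gk (ξ x v : ℝ) : ℝ :=
  Real.exp (-(Real.exp (-(x/ξ)) * Real.cosh (v/ξ)))

lemma Gk_nonneg (ξ x v : ℝ) : 0 ≤ Gk ξ x v := (Real.exp_pos _).le

lemma Gk_le_one (ξ x v : ℝ) : Gk ξ x v ≤ 1 := by
  rw [Gk, Real.exp_le_one_iff]
  have := Real.exp_pos (-(x/ξ))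
  nlinarith [Real.cosh_pos (v/ξ)]

lemma Gk_le_bound {ξ x v : ℝ} (hξ : ξ ∈ Set.Ioc (0:ℝ) 1) (hv : 0 < v) :
    Gk ξ x v ≤ Real.exp (x+1) * Real.exp (-v) := by
  rw [← Real.exp_add]
  rcases le_or_gt v (x+1) with h | h
  · exact le_trans (Gk_le_one ξ x v) (Real.one_le_exp (by linarith))
  · rw [Gk, Real.exp_le_exp]
    have h1 : Real.exp ((v-x)/ξ) / 2 ≤ Real.exp (-(x/ξ)) * Real.cosh (v/ξ) := by
      have hc := my_half_exp_le_cosh (v/ξ)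
      have he : Real.exp (-(x/ξ)) * (Real.exp (v/ξ) / 2) = Real.exp ((v-x)/ξ) / 2 := by
        rw [mul_div_assoc', ← Real.exp_add]; ring_nf
      calc Real.exp ((v-x)/ξ) / 2 = Real.exp (-(x/ξ)) * (Real.exp (v/ξ) / 2) := he.symm
        _ ≤ Real.exp (-(x/ξ)) * Real.cosh (v/ξ) :=
            mul_le_mul_of_nonneg_left (by linarith) (Real.exp_pos _).le
    have h2 : v - x ≤ (v-x)/ξ := by
      rw [le_div_iff₀ hξ.1]
      nlinarith [hξ.2]
    have h3 : v - x ≤ Real.exp ((v-x)/ξ) / 2 :=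
      le_trans h2 (le_trans (my_le_exp_half (by linarith)) (by
        have := Real.exp_le_exp.2 h2
        linarith))
    linarith

lemma Gk_continuous (ξ x : ℝ) : Continuous (fun v => Gk ξ x v) := by
  unfold Gk; fun_prop

lemma bound_v_integrable (x : ℝ) :
    IntegrableOn (fun v : ℝ => Real.exp (x+1) * Real.exp (-v)) (Set.Ioi 0) := by
  have h := exp_neg_integrableOn_Ioi 0 (one_pos (α := ℝ))
  have h2 : IntegrableOn (fun v : ℝ => Real.exp (-v)) (Set.Ioi 0) := by simpa using h
  exact h2.const_mul _

/-! ### Change of variables -/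

lemma cov_Kik {ξ : ℝ} (hξ : 0 < ξ) (k x : ℝ) :
    ξ * Kik (ξ*k) (Real.exp (-(x/ξ))) = ∫ v in Set.Ioi (0:ℝ), Gk ξ x v * Real.cos (k*v) := by
  have h := integral_comp_mul_left_Ioi
    (fun u => Real.exp (-(Real.exp (-(x/ξ)) * Real.cosh u)) * Real.cos (ξ*k*u)) 0
    (inv_pos.mpr hξ)
  simp only [mul_zero, inv_inv, smul_eq_mul] at h
  rw [Kik, ← h]
  refine setIntegral_congr_fun measurableSet_Ioi (fun v _ => ?_)
  have hξ' : ξ ≠ 0 := ne_of_gt hξ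
  rw [Gk]
  congr 2
  · rw [inv_mul_eq_div]
  · field_simp

lemma cov_K0 {ξ : ℝ} (hξ : 0 < ξ) (x : ℝ) :
    ξ * K0 (Real.exp (-(x/ξ))) = ∫ v in Set.Ioi (0:ℝ), Gk ξ x v := by
  have h := integral_comp_mul_left_Ioi
    (fun u => Real.exp (-(Real.exp (-(x/ξ)) * Real.cosh u))) 0 (inv_pos.mpr hξ)
  simp only [mul_zero, inv_inv, smul_eq_mul] at h
  rw [K0, ← h]
  refine setIntegral_congr_fun measurableSet_Ioi (fun v _ => ?_)
  rw [Gk, inv_mul_eq_div]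

/-! ### Pointwise limits of `Gk` -/

lemma tendsto_exp_div_neg {c : ℝ} (hc : c < 0) :
    Tendsto (fun ξ : ℝ => Real.exp (c/ξ)) (𝓝[>] 0) (𝓝 0) := by
  apply Real.tendsto_exp_atBot.comp
  have h1 : Tendsto (fun ξ : ℝ => c * ξ⁻¹) (𝓝[>] 0) atBot :=
    tendsto_inv_nhdsGT_zero.const_mul_atTop_of_neg hc
  exact h1.congr (fun ξ => by rw [mul_comm, ← div_eq_inv_mul])

lemma tendsto_exp_div_pos {c : ℝ} (hc : 0 < c) :
    Tendsto (fun ξ : ℝ => Real.exp (c/ξ)) (𝓝[>] 0) atTop := by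
  apply Real.tendsto_exp_atTop.comp
  have h1 : Tendsto (fun ξ : ℝ => c * ξ⁻¹) (𝓝[>] 0) atTop :=
    tendsto_inv_nhdsGT_zero.const_mul_atTop hc
  exact h1.congr (fun ξ => by rw [mul_comm, ← div_eq_inv_mul])

lemma Gk_tendsto_one {x v : ℝ} (hv : 0 < v) (hvx : v < x) :
    Tendsto (fun ξ : ℝ => Gk ξ x v) (𝓝[>] 0) (𝓝 1) := by
  have key : Tendsto (fun ξ : ℝ => Real.exp (-(x/ξ)) * Real.cosh (v/ξ)) (𝓝[>] 0) (𝓝 0) := by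
    apply squeeze_zero'
    · filter_upwards with ξ
      positivity
    · filter_upwards [self_mem_nhdsWithin] with ξ (hξ : 0 < ξ)
      have h1 : Real.cosh (v/ξ) ≤ Real.exp (v/ξ) := my_cosh_le_exp (by positivity)
      calc Real.exp (-(x/ξ)) * Real.cosh (v/ξ) ≤ Real.exp (-(x/ξ)) * Real.exp (v/ξ) :=
            mul_le_mul_of_nonneg_left h1 (Real.exp_pos _).le
        _ = Real.exp ((v-x)/ξ) := by rw [← Real.exp_add]; ring_nf
    · exact tendsto_exp_div_neg (by linarith)
  have := (Real.continuous_exp.tendsto 0).comp (neg_zero (G := ℝ) ▸ key.neg)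
  simpa [Gk, Function.comp_def] using this

lemma Gk_tendsto_zero {x v : ℝ} (hv : 0 < v) (hvx : x < v) :
    Tendsto (fun ξ : ℝ => Gk ξ x v) (𝓝[>] 0) (𝓝 0) := by
  have key : Tendsto (fun ξ : ℝ => Real.exp (-(x/ξ)) * Real.cosh (v/ξ)) (𝓝[>] 0) atTop := by
    apply tendsto_atTop_mono' _ _
      ((tendsto_exp_div_pos (show (0:ℝ) < v - x by linarith)).atTop_div_const two_pos)
    filter_upwards [self_mem_nhdsWithin] with ξ (hξ : 0 < ξ)
    have h1 : Real.exp (v/ξ) / 2 ≤ Real.cosh (v/ξ) := my_half_exp_le_cosh _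
    calc Real.exp ((v-x)/ξ) / 2 = Real.exp (-(x/ξ)) * (Real.exp (v/ξ) / 2) := by
          rw [mul_div_assoc', ← Real.exp_add]; ring_nf
      _ ≤ Real.exp (-(x/ξ)) * Real.cosh (v/ξ) :=
          mul_le_mul_of_nonneg_left h1 (Real.exp_pos _).le
  have h2 : Tendsto (fun ξ : ℝ => -(Real.exp (-(x/ξ)) * Real.cosh (v/ξ))) (𝓝[>] 0) atBot :=
    tendsto_neg_atBot_iff.mpr key
  exact Real.tendsto_exp_atBot.comp h2

/-! ### The inner (v-)limit via dominated convergence -/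

lemma Gk_cos_meas (ξ x k : ℝ) :
    AEStronglyMeasurable (fun v => Gk ξ x v * Real.cos (k*v))
      (volume.restrict (Set.Ioi 0)) :=
  ((Gk_continuous ξ x).mul (by fun_prop)).aestronglyMeasurable

lemma tendsto_int_Gk (k : ℝ) {x : ℝ} (hx : 0 < x) :
    Tendsto (fun ξ : ℝ => ∫ v in Set.Ioi (0:ℝ), Gk ξ x v * Real.cos (k*v)) (𝓝[>] 0)
      (𝓝 (∫ v in Set.Ioo (0:ℝ) x, Real.cos (k*v))) := by
  have hmain := tendsto_integral_filter_of_dominated_convergence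
    (μ := volume.restrict (Set.Ioi (0:ℝ))) (l := 𝓝[>] (0:ℝ))
    (F := fun ξ v => Gk ξ x v * Real.cos (k*v))
    (f := (Set.Ioo (0:ℝ) x).indicator (fun v => Real.cos (k*v)))
    (bound := fun v => Real.exp (x+1) * Real.exp (-v))
    (Eventually.of_forall (fun ξ => Gk_cos_meas ξ x k))
    ?_ (bound_v_integrable x) ?_
  · have heq : ∫ v, (Set.Ioo (0:ℝ) x).indicator (fun v => Real.cos (k*v)) v
        ∂(volume.restrict (Set.Ioi 0)) = ∫ v in Set.Ioo (0:ℝ) x, Real.cos (k*v) := by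
      rw [integral_indicator measurableSet_Ioo, Measure.restrict_restrict measurableSet_Ioo,
        Set.inter_eq_self_of_subset_left Set.Ioo_subset_Ioi_self]
    rwa [heq] at hmain
  · filter_upwards [Ioc_mem_nhdsGT_of_mem (Set.left_mem_Ico.mpr one_pos)] with ξ hξ
    rw [ae_restrict_iff' measurableSet_Ioi]
    filter_upwards with v hv
    rw [norm_mul, Real.norm_eq_abs, Real.norm_eq_abs, abs_of_nonneg (Gk_nonneg ξ x v)]
    calc Gk ξ x v * |Real.cos (k*v)| ≤ Gk ξ x v * 1 :=
          mul_le_mul_of_nonneg_left (Real.abs_cos_le_one _) (Gk_nonneg ξ x v)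
      _ = Gk ξ x v := mul_one _
      _ ≤ Real.exp (x+1) * Real.exp (-v) := Gk_le_bound hξ hv
  · have hne : ∀ᵐ v ∂(volume.restrict (Set.Ioi (0:ℝ))), v ≠ x :=
      ae_restrict_of_ae (by
        rw [ae_iff]
        simpa using measure_singleton x)
    filter_upwards [ae_restrict_mem measurableSet_Ioi, hne] with v hv hvx
    rcases lt_or_gt_of_ne hvx with h | h
    · have hmem : v ∈ Set.Ioo (0:ℝ) x := ⟨hv, h⟩
      rw [Set.indicator_of_mem hmem]
      simpa using (Gk_tendsto_one hv h).mul_const (Real.cos (k*v))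
    · have hmem : v ∉ Set.Ioo (0:ℝ) x := fun hm => absurd hm.2 (not_lt.mpr h.le)
      rw [Set.indicator_of_notMem hmem]
      simpa using (Gk_tendsto_zero hv h).mul_const (Real.cos (k*v))

open intervalIntegral in
lemma k_mul_int_cos {x : ℝ} (hx : 0 < x) (k : ℝ) :
    k * ∫ v in Set.Ioo (0:ℝ) x, Real.cos (k*v) = Real.sin (k*x) := by
  rcases eq_or_ne k 0 with rfl | hk
  · simp
  · have h1 : ∫ v in Set.Ioo (0:ℝ) x, Real.cos (k*v)
        = ∫ v in (0:ℝ)..x, Real.cos (k*v) := by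
      rw [integral_of_le hx.le, integral_Ioc_eq_integral_Ioo]
    rw [h1, integral_comp_mul_left (fun u => Real.cos u) hk]
    rw [show ∫ (x : ℝ) in (k*0)..(k*x), Real.cos x
        = Real.sin (k*x) - Real.sin (k*0) from integral_cos]
    simp [smul_eq_mul]
    field_simp

/-! ### Uniform bounds for the k-integrand -/

lemma abs_int_Gk_le {ξ x : ℝ} (hξ : ξ ∈ Set.Ioc (0:ℝ) 1) (k : ℝ) :
    |∫ v in Set.Ioi (0:ℝ), Gk ξ x v * Real.cos (k*v)| ≤ Real.exp (x+1) := by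
  have h := norm_integral_le_of_norm_le (bound_v_integrable x)
    (f := fun v => Gk ξ x v * Real.cos (k*v)) ?_
  · refine le_trans h (le_of_eq ?_)
    rw [integral_const_mul, integral_exp_neg_Ioi_zero, mul_one]
  · rw [ae_restrict_iff' measurableSet_Ioi]
    filter_upwards with v hv
    rw [norm_mul, Real.norm_eq_abs, Real.norm_eq_abs, abs_of_nonneg (Gk_nonneg ξ x v)]
    calc Gk ξ x v * |Real.cos (k*v)| ≤ Gk ξ x v * 1 :=
          mul_le_mul_of_nonneg_left (Real.abs_cos_le_one _) (Gk_nonneg ξ x v)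
      _ = Gk ξ x v := mul_one _
      _ ≤ Real.exp (x+1) * Real.exp (-v) := Gk_le_bound hξ hv

lemma sinh_term_bound {ξ : ℝ} (hξ : ξ ∈ Set.Ioc (0:ℝ) 1) (k : ℝ) :
    |k * (Real.sinh (Real.pi*ξ*k)/ξ)| ≤ Real.pi * k^2 * Real.exp (Real.pi * |k|) := by
  have hξ0 := hξ.1
  have hπ := Real.pi_pos
  have h1 : |Real.sinh (Real.pi*ξ*k)| = Real.sinh (Real.pi*ξ*|k|) := by
    rw [Real.abs_sinh]
    congr 1
    rw [abs_mul, abs_of_nonneg (by positivity : (0:ℝ) ≤ Real.pi * ξ)]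
  have h2 : Real.sinh (Real.pi*ξ*|k|) ≤ (Real.pi*ξ*|k|) * Real.exp (Real.pi*ξ*|k|) :=
    my_sinh_le (by positivity)
  have h3 : Real.exp (Real.pi*ξ*|k|) ≤ Real.exp (Real.pi*|k|) := by
    apply Real.exp_le_exp.2
    nlinarith [abs_nonneg k, hξ.2, mul_le_mul_of_nonneg_right hξ.2 (abs_nonneg k)]
  rw [abs_mul, abs_div, abs_of_nonneg hξ0.le, h1]
  rw [mul_div_assoc'] at *
  rw [div_le_iff₀ hξ0]
  calc |k| * Real.sinh (Real.pi*ξ*|k|)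
      ≤ |k| * ((Real.pi*ξ*|k|) * Real.exp (Real.pi*|k|)) := by
        apply mul_le_mul_of_nonneg_left _ (abs_nonneg k)
        exact le_trans h2 (mul_le_mul_of_nonneg_left h3 (by positivity))
    _ = Real.pi * (|k| * |k|) * Real.exp (Real.pi * |k|) * ξ := by ring
    _ = Real.pi * k^2 * Real.exp (Real.pi * |k|) * ξ := by rw [← sq_abs]; ring

/-! ### Integrability and continuity facts -/

lemma integrable_exp_cosh {z : ℝ} (hz : 0 < z) :
    IntegrableOn (fun u : ℝ => Real.exp (-(z * Real.cosh u))) (Set.Ioi 0) := by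
  have hb : IntegrableOn (fun u : ℝ => Real.exp (-z/2) * Real.exp (-(z/2) * u)) (Set.Ioi 0) :=
    (exp_neg_integrableOn_Ioi 0 (by positivity : (0:ℝ) < z/2)).const_mul _
  apply hb.mono' (Continuous.aestronglyMeasurable (by fun_prop))
  rw [ae_restrict_iff' measurableSet_Ioi]
  filter_upwards with u hu
  rw [Real.norm_eq_abs, abs_of_pos (Real.exp_pos _), ← Real.exp_add]
  apply Real.exp_le_exp.2
  have h1 : (1 + u)/2 ≤ Real.cosh u := by
    have h2 : Real.exp u / 2 ≤ Real.cosh u := my_half_exp_le_cosh u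
    have := Real.add_one_le_exp u
    linarith
  nlinarith [Real.cosh_pos u]

lemma Kik_cont {z : ℝ} (hz : 0 < z) : Continuous (fun k : ℝ => Kik k z) := by
  unfold Kik
  apply continuous_of_dominated (bound := fun u => Real.exp (-(z * Real.cosh u)))
  · intro k; exact Continuous.aestronglyMeasurable (by fun_prop)
  · intro k
    filter_upwards with u
    rw [norm_mul, Real.norm_eq_abs, Real.norm_eq_abs, abs_of_pos (Real.exp_pos _)]
    calc Real.exp (-(z * Real.cosh u)) * |Real.cos (k*u)|
        ≤ Real.exp (-(z * Real.cosh u)) * 1 :=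
          mul_le_mul_of_nonneg_left (Real.abs_cos_le_one _) (Real.exp_pos _).le
      _ = _ := mul_one _
  · exact integrable_exp_cosh hz
  · filter_upwards with u
    fun_prop

lemma integrable_cos_gauss {b : ℝ} (hb : 0 < b) (c : ℝ) :
    Integrable (fun k : ℝ => Real.cos (c*k) * Real.exp (-b * k^2)) := by
  apply (integrable_exp_neg_mul_sq hb).mono'
    (Continuous.aestronglyMeasurable (by fun_prop))
  filter_upwards with k
  rw [norm_mul, Real.norm_eq_abs, Real.norm_eq_abs, abs_of_pos (Real.exp_pos _)]
  calc |Real.cos (c*k)| * Real.exp (-b*k^2) ≤ 1 * Real.exp (-b*k^2) :=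
        mul_le_mul_of_nonneg_right (Real.abs_cos_le_one _) (Real.exp_pos _).le
    _ = _ := one_mul _

lemma gauss_cos {b : ℝ} (hb : 0 < b) (c : ℝ) :
    ∫ k : ℝ, Real.cos (c*k) * Real.exp (-b * k^2)
      = Real.sqrt (Real.pi/b) * Real.exp (-c^2/(4*b)) := by
  have hb' : (0:ℝ) < ((b:ℂ)).re := by simpa using hb
  have key := fourierIntegral_gaussian (b := (b:ℂ)) hb' (c : ℂ)
  have hint : Integrable (fun x : ℝ => Complex.exp (Complex.I * c * x) * Complex.exp (-(b:ℂ) * x^2)) := by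
    have h2 := integrable_cexp_quadratic (b := (b:ℂ)) hb' (Complex.I*c) 0
    apply h2.congr
    filter_upwards with x
    rw [← Complex.exp_add]
    congr 1
    ring
  have hre : (∫ x : ℝ, Complex.exp (Complex.I * c * x) * Complex.exp (-(b:ℂ) * x^2)).re
      = ∫ x : ℝ, Real.cos (c*x) * Real.exp (-b * x^2) := by
    rw [← RCLike.re_to_complex, ← integral_re hint]
    congr 1
    funext x
    rw [RCLike.re_to_complex]
    have h1 : Complex.I * (c:ℂ) * (x:ℂ) = ((c*x : ℝ) : ℂ) * Complex.I := by push_cast; ring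
    have h2 : -(b:ℂ) * (x:ℂ)^2 = ((-b*x^2 : ℝ) : ℂ) := by push_cast; ring
    rw [h1, h2, ← Complex.ofReal_exp, Complex.mul_re, Complex.exp_ofReal_mul_I_re,
      Complex.exp_ofReal_mul_I_im]
    simp only [Complex.ofReal_re, Complex.ofReal_im, mul_zero, sub_zero]
  have hrhs : ((Real.pi/(b:ℂ)) ^ (1/2 : ℂ) * Complex.exp (-(c:ℂ)^2 / (4*(b:ℂ)))).re
      = Real.sqrt (Real.pi/b) * Real.exp (-c^2/(4*b)) := by
    have h1 : ((Real.pi/(b:ℂ)) : ℂ) ^ (1/2 : ℂ) = ((Real.sqrt (Real.pi/b) : ℝ) : ℂ) := by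
      have h2 : ((Real.pi/(b:ℂ))) = (((Real.pi/b : ℝ)) : ℂ) := by push_cast; ring
      rw [h2, show (1/2 : ℂ) = ((1/2 : ℝ) : ℂ) by norm_num,
        ← Complex.ofReal_cpow (by positivity), Real.sqrt_eq_rpow]
    have h3 : -(c:ℂ)^2 / (4*(b:ℂ)) = ((-c^2/(4*b) : ℝ) : ℂ) := by push_cast; ring
    rw [h1, h3, ← Complex.ofReal_exp, ← Complex.ofReal_mul, Complex.ofReal_re]
  rw [← hre, key, hrhs]

lemma boundk_integrable {b : ℝ} (hb : 0 < b) (C : ℝ) :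
    Integrable (fun k : ℝ => C * (k^2 * Real.exp (-b * k^2))) := by
  have h := integrable_rpow_mul_exp_neg_mul_sq hb (s := 2) (by norm_num)
  have h2 : Integrable (fun k : ℝ => k^2 * Real.exp (-b * k^2)) := by
    apply h.congr
    filter_upwards with k
    rw [show ((2:ℝ) = ((2:ℕ):ℝ)) by norm_num, Real.rpow_natCast]
  exact h2.const_mul _

lemma int_g {t : ℝ} (ht : 0 < t) (x y : ℝ) :
    ∫ k : ℝ, Real.pi * (Real.exp (-(k^2*t)/2) * (Real.sin (k*x) * Real.sin (k*y)))
      = Real.pi/2 * (Real.sqrt (2*Real.pi/t) * Real.exp (-(x-y)^2/(2*t))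
          - Real.sqrt (2*Real.pi/t) * Real.exp (-(x+y)^2/(2*t))) := by
  have hhalf : (0:ℝ) < t/2 := by positivity
  have h1 : (fun k : ℝ => Real.pi * (Real.exp (-(k^2*t)/2) * (Real.sin (k*x) * Real.sin (k*y))))
      = fun k => (Real.pi/2) * (Real.cos ((x-y)*k) * Real.exp (-(t/2)*k^2)
          - Real.cos ((x+y)*k) * Real.exp (-(t/2)*k^2)) := by
    funext k
    rw [show (x-y)*k = k*x - k*y by ring, show (x+y)*k = k*x + k*y by ring,
      Real.cos_sub, Real.cos_add, show -(k^2*t)/2 = -(t/2)*k^2 by ring]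
    ring
  rw [h1, integral_const_mul,
    integral_sub (integrable_cos_gauss hhalf (x-y)) (integrable_cos_gauss hhalf (x+y)),
    gauss_cos hhalf (x-y), gauss_cos hhalf (x+y),
    show Real.pi/(t/2) = 2*Real.pi/t from by rw [div_div_eq_mul_div]; ring,
    show (4*(t/2):ℝ) = 2*t from by ring]

end BesselAux

/-- As `ξ → 0⁺`, the conditioned transition density `P_ξ(t,y|x)` converges to the
transition density of the three-dimensional Bessel process BES(3). -/
theorem Pxi_xi_to_zero_limit_bessel (t : ℝ) (ht : 0 < t) (x y : ℝ) (hx : 0 < x) (hy : 0 < y) :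
    Tendsto (fun ξ : ℝ =>
        (K0 (Real.exp (-(y / ξ))) / K0 (Real.exp (-(x / ξ)))) * Qxi ξ t y x) (𝓝[>] 0)
      (𝓝 ((y / x) * ((Real.sqrt (2 * Real.pi * t))⁻¹ *
        (Real.exp (-(x - y) ^ 2 / (2 * t)) - Real.exp (-(x + y) ^ 2 / (2 * t)))))) := by
  have hπ := Real.pi_pos
  set F : ℝ → ℝ → ℝ := fun ξ k =>
    Real.exp (-(k ^ 2 * t)/2) * ((ξ * Kik (ξ*k) (Real.exp (-(x/ξ)))) *
      (ξ * Kik (ξ*k) (Real.exp (-(y/ξ)))) * (k * (Real.sinh (Real.pi*ξ*k)/ξ))) with hF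
  set g : ℝ → ℝ := fun k =>
    Real.pi * (Real.exp (-(k ^ 2 * t)/2) * (Real.sin (k*x) * Real.sin (k*y))) with hg
  -- dominated convergence in k
  have hQint : Tendsto (fun ξ => ∫ k : ℝ, F ξ k) (𝓝[>] 0) (𝓝 (∫ k : ℝ, g k)) := by
    apply tendsto_integral_filter_of_dominated_convergence
      (bound := fun k => (Real.exp (x+1) * Real.exp (y+1) * Real.pi * Real.exp (Real.pi^2/t))
        * (k^2 * Real.exp (-(t/4) * k^2)))
    · filter_upwards [self_mem_nhdsWithin] with ξ (hξ : 0 < ξ)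
      have hKx : Continuous (fun k : ℝ => Kik (ξ*k) (Real.exp (-(x/ξ)))) :=
        (Kik_cont (Real.exp_pos _)).comp (continuous_const.mul continuous_id)
      have hKy : Continuous (fun k : ℝ => Kik (ξ*k) (Real.exp (-(y/ξ)))) :=
        (Kik_cont (Real.exp_pos _)).comp (continuous_const.mul continuous_id)
      have hcont : Continuous (fun k => F ξ k) := by
        rw [hF]
        apply Continuous.mul (by fun_prop)
        apply Continuous.mul
        · exact ((continuous_const.mul hKx).mul (continuous_const.mul hKy))
        · fun_prop
      exact hcont.aestronglyMeasurable
    · filter_upwards [Ioc_mem_nhdsGT_of_mem (Set.left_mem_Ico.mpr one_pos)] with ξ hξ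
      filter_upwards with k
      have hAx : |ξ * Kik (ξ*k) (Real.exp (-(x/ξ)))| ≤ Real.exp (x+1) := by
        rw [cov_Kik hξ.1]; exact abs_int_Gk_le hξ k
      have hAy : |ξ * Kik (ξ*k) (Real.exp (-(y/ξ)))| ≤ Real.exp (y+1) := by
        rw [cov_Kik hξ.1]; exact abs_int_Gk_le hξ k
      have hS := sinh_term_bound hξ k
      have hexp : Real.exp (-(k ^ 2 * t)/2) * Real.exp (Real.pi*|k|)
          ≤ Real.exp (Real.pi^2/t) * Real.exp (-(t/4)*k^2) := by
        rw [← Real.exp_add, ← Real.exp_add]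
        apply Real.exp_le_exp.2
        have hk4 : Real.pi * |k| * t ≤ Real.pi^2 + (t/4)*k^2*t := by
          have ha : (0:ℝ) ≤ t^2 * k^2 - 4 * Real.pi * t * |k| + 4 * Real.pi^2 := by
            have hb := sq_nonneg (t * |k| - 2*Real.pi)
            have hc : (t * |k| - 2*Real.pi)^2
                = t^2 * k^2 - 4 * Real.pi * t * |k| + 4 * Real.pi^2 := by
              rw [← sq_abs k]; ring
            linarith [hc ▸ hb]
          have hb2 : (t/4)*k^2*t = t^2*k^2/4 := by ring
          linarith
        have hk5 : Real.pi * |k| ≤ Real.pi^2/t + (t/4)*k^2 := by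
          rw [← sub_nonneg] at hk4 ⊢
          have := div_nonneg hk4 ht.le
          calc (0:ℝ) ≤ (Real.pi^2 + (t/4)*k^2*t - Real.pi * |k| * t)/t := this
            _ = Real.pi^2/t + (t/4)*k^2 - Real.pi * |k| := by field_simp
        linarith
      rw [Real.norm_eq_abs, hF]
      calc |Real.exp (-(k ^ 2 * t)/2) * ((ξ * Kik (ξ*k) (Real.exp (-(x/ξ)))) *
            (ξ * Kik (ξ*k) (Real.exp (-(y/ξ)))) * (k * (Real.sinh (Real.pi*ξ*k)/ξ)))|
          = Real.exp (-(k ^ 2 * t)/2) * (|ξ * Kik (ξ*k) (Real.exp (-(x/ξ)))| *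
            |ξ * Kik (ξ*k) (Real.exp (-(y/ξ)))| * |k * (Real.sinh (Real.pi*ξ*k)/ξ)|) := by
            rw [abs_mul, abs_mul, abs_mul, abs_of_pos (Real.exp_pos _)]
        _ ≤ Real.exp (-(k ^ 2 * t)/2) * (Real.exp (x+1) * Real.exp (y+1) *
            (Real.pi * k^2 * Real.exp (Real.pi * |k|))) := by
            apply mul_le_mul_of_nonneg_left _ (Real.exp_pos _).le
            apply mul_le_mul _ hS (abs_nonneg _) (by positivity)
            exact mul_le_mul hAx hAy (abs_nonneg _) (Real.exp_pos _).le
        _ = (Real.exp (x+1) * Real.exp (y+1) * Real.pi * k^2) *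
            (Real.exp (-(k ^ 2 * t)/2) * Real.exp (Real.pi * |k|)) := by ring
        _ ≤ (Real.exp (x+1) * Real.exp (y+1) * Real.pi * k^2) *
            (Real.exp (Real.pi^2/t) * Real.exp (-(t/4)*k^2)) := by
            apply mul_le_mul_of_nonneg_left hexp (by positivity)
        _ = (Real.exp (x+1) * Real.exp (y+1) * Real.pi * Real.exp (Real.pi^2/t))
            * (k^2 * Real.exp (-(t/4) * k^2)) := by ring
    · exact boundk_integrable (by positivity) _
    · apply Eventually.of_forall
      intro k
      have hAx : Tendsto (fun ξ : ℝ => ξ * Kik (ξ*k) (Real.exp (-(x/ξ)))) (𝓝[>] 0)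
          (𝓝 (∫ v in Set.Ioo (0:ℝ) x, Real.cos (k*v))) := by
        apply Filter.Tendsto.congr' _ (tendsto_int_Gk k hx)
        filter_upwards [self_mem_nhdsWithin] with ξ (hξ : 0 < ξ)
        exact (cov_Kik hξ k x).symm
      have hAy : Tendsto (fun ξ : ℝ => ξ * Kik (ξ*k) (Real.exp (-(y/ξ)))) (𝓝[>] 0)
          (𝓝 (∫ v in Set.Ioo (0:ℝ) y, Real.cos (k*v))) := by
        apply Filter.Tendsto.congr' _ (tendsto_int_Gk k hy)
        filter_upwards [self_mem_nhdsWithin] with ξ (hξ : 0 < ξ)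
        exact (cov_Kik hξ k y).symm
      have hS : Tendsto (fun ξ : ℝ => k * (Real.sinh (Real.pi*ξ*k)/ξ)) (𝓝[>] 0)
          (𝓝 (k * (Real.pi*k))) := by
        have h := (my_sinh_slope (Real.pi*k)).const_mul k
        apply h.congr
        intro ξ
        rw [mul_right_comm]
      have htot := ((hAx.mul hAy).mul hS).const_mul (Real.exp (-(k ^ 2 * t)/2))
      have hval : Real.exp (-(k ^ 2 * t)/2) * ((∫ v in Set.Ioo (0:ℝ) x, Real.cos (k*v)) *
          (∫ v in Set.Ioo (0:ℝ) y, Real.cos (k*v)) * (k * (Real.pi*k))) = g k := by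
        simp only [hg]
        rw [← k_mul_int_cos hx k, ← k_mul_int_cos hy k]
        ring
      rw [← hval]
      exact htot
  -- convergence of Qxi
  have hQ : Tendsto (fun ξ : ℝ => Qxi ξ t y x) (𝓝[>] 0)
      (𝓝 ((1/Real.pi^2) * ∫ k : ℝ, g k)) := by
    apply Filter.Tendsto.congr' _ (hQint.const_mul (1/Real.pi^2))
    filter_upwards [self_mem_nhdsWithin] with ξ (hξ : 0 < ξ)
    simp only [Qxi]
    congr 1
    apply integral_congr_ae
    filter_upwards with k
    simp only [hF]
    field_simp
  -- convergence of the ratio of K0's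
  have h0x : Tendsto (fun ξ : ℝ => ξ * K0 (Real.exp (-(x/ξ)))) (𝓝[>] 0) (𝓝 x) := by
    have h := tendsto_int_Gk 0 hx
    simp only [zero_mul, Real.cos_zero, mul_one] at h
    have hx1 : ∫ v in Set.Ioo (0:ℝ) x, (1:ℝ) = x := by
      simp [Real.volume_Ioo, ENNReal.toReal_ofReal hx.le, hx.le]
    rw [hx1] at h
    apply Filter.Tendsto.congr' _ h
    filter_upwards [self_mem_nhdsWithin] with ξ (hξ : 0 < ξ)
    exact (cov_K0 hξ x).symm
  have h0y : Tendsto (fun ξ : ℝ => ξ * K0 (Real.exp (-(y/ξ)))) (𝓝[>] 0) (𝓝 y) := by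
    have h := tendsto_int_Gk 0 hy
    simp only [zero_mul, Real.cos_zero, mul_one] at h
    have hy1 : ∫ v in Set.Ioo (0:ℝ) y, (1:ℝ) = y := by
      simp [Real.volume_Ioo, ENNReal.toReal_ofReal hy.le, hy.le]
    rw [hy1] at h
    apply Filter.Tendsto.congr' _ h
    filter_upwards [self_mem_nhdsWithin] with ξ (hξ : 0 < ξ)
    exact (cov_K0 hξ y).symm
  have hRatio : Tendsto (fun ξ : ℝ =>
      K0 (Real.exp (-(y/ξ))) / K0 (Real.exp (-(x/ξ)))) (𝓝[>] 0) (𝓝 (y/x)) := by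
    apply Filter.Tendsto.congr' _ (h0y.div h0x (ne_of_gt hx))
    filter_upwards [self_mem_nhdsWithin] with ξ (hξ : 0 < ξ)
    exact mul_div_mul_left _ _ (ne_of_gt hξ)
  have hfull := hRatio.mul hQ
  have hI := int_g ht x y
  have hst : (0:ℝ) < Real.sqrt (2*Real.pi*t) := Real.sqrt_pos.mpr (by positivity)
  have hs : Real.sqrt (2*Real.pi/t) * Real.sqrt (2*Real.pi*t) = 2*Real.pi := by
    rw [← Real.sqrt_mul (by positivity)]
    rw [show (2*Real.pi/t)*(2*Real.pi*t) = (2*Real.pi)^2 by field_simp]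
    exact Real.sqrt_sq (by positivity)
  have hvaleq : (y/x) * ((1/Real.pi^2) * ∫ k : ℝ, g k)
      = (y / x) * ((Real.sqrt (2 * Real.pi * t))⁻¹ *
        (Real.exp (-(x - y) ^ 2 / (2 * t)) - Real.exp (-(x + y) ^ 2 / (2 * t)))) := by
    rw [hI, show Real.sqrt (2*Real.pi/t) = 2*Real.pi/Real.sqrt (2*Real.pi*t) from by
      rw [eq_div_iff hst.ne']; exact hs]
    field_simp
  rwa [hvaleq] at hfull
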